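/- arXiv:1605.05764 — 2 statements merged into one kernel-verified Lean document; each statement's English description precedes it below -/
import Mathlib

section
/- Let f(n) → ∞ and φ > 0 be a constant. There exists ζ > 0 such that for p = p(n) ∈ [f(n)/n, 1] and large n, the probability that some set S ⊆ [n] with |S| ≤ ζn satisfies |A[S]| > φ·n·|S|·p in D(n,p) is at most exp(−f(n)²/2). -/
open Finset MeasureTheory Filter
open scoped ENNReal

/-- Index type for the possible arcs of a digraph on `[n]`: ordered pairs of
distinct vertices. -/
abbrev ArcIdx (n : ℕ) := {a : Fin n × Fin n // a.1 ≠ a.2}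

/-- A sample point of the random digraph: which arcs are present. -/
abbrev ArcSpace (n : ℕ) := ArcIdx n → Bool

/-- The law of `D(n,p)`: each of the `n(n-1)` arcs is present independently
with probability `p`. -/
noncomputable def digraphMeasure (n : ℕ) (p : ℝ) : Measure (ArcSpace n) :=
  Measure.pi fun _ =>
    (PMF.bernoulli (min (Real.toNNReal p) 1) (min_le_right _ _)).toMeasure

/-- The arc set of the digraph determined by a sample point. -/
def DigraphOf {n : ℕ} (ω : ArcSpace n) : Finset (Fin n × Fin n) :=
  (Finset.univ.filter fun a : ArcIdx n => ω a = true).image Subtype.val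

/-- In-degree of a vertex in a digraph given by its arc set. -/
def inDegD {V : Type*} [Fintype V] [DecidableEq V] (A : Finset (V × V)) (v : V) : ℕ :=
  (A.filter fun e => e.2 = v).card

/-- Out-degree of a vertex. -/
def outDegD {V : Type*} [Fintype V] [DecidableEq V] (A : Finset (V × V)) (v : V) : ℕ :=
  (A.filter fun e => e.1 = v).card

/-- Minimum in-degree. -/
noncomputable def minInDegD {V : Type*} [Fintype V] [DecidableEq V]
    (A : Finset (V × V)) : ℕ :=
  sInf {d : ℕ | ∃ v : V, inDegD A v = d}

/-- Minimum out-degree. -/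
noncomputable def minOutDegD {V : Type*} [Fintype V] [DecidableEq V]
    (A : Finset (V × V)) : ℕ :=
  sInf {d : ℕ | ∃ v : V, outDegD A v = d}

/- ### Auxiliary material -/

noncomputable def zeta (φ : ℝ) : ℝ := (φ/3) * Real.exp (-(2/φ^2+1))

lemma zeta_pos {φ : ℝ} (hφ : 0 < φ) : 0 < zeta φ := by
  unfold zeta; positivity

noncomputable def Fbd (φ : ℝ) : ℝ :=
  max 1 (max (2/φ) (4*(Real.log (9/φ)+1)/((2/φ^2+1)*φ)))

lemma aux_pow_le_fact (k : ℕ) : (k:ℝ)^k ≤ 3^k * k.factorial := by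
  induction k with
  | zero => simp
  | succ k ih =>
    have h4 : Real.exp 1 ≤ 3 := by have := Real.exp_one_lt_d9; linarith
    rcases Nat.eq_zero_or_pos k with rfl | hk
    · norm_num
    have hk0 : (0:ℝ) < k := by exact_mod_cast hk
    have h1 : ((k:ℝ)+1) ≤ k * Real.exp (1/k) := by
      have h := Real.add_one_le_exp (1/(k:ℝ))
      calc (k:ℝ)+1 = k*(1/k+1) := by field_simp; ring
        _ ≤ k*Real.exp (1/k) := by
            exact mul_le_mul_of_nonneg_left h hk0.le
    have h2 : ((k:ℝ)+1)^k ≤ ((k:ℝ)*Real.exp (1/k))^k := pow_le_pow_left₀ (by positivity) h1 k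
    have h3 : ((k:ℝ)*Real.exp (1/(k:ℝ)))^k = (k:ℝ)^k * Real.exp 1 := by
      rw [mul_pow, ← Real.exp_nat_mul]
      congr 2
      field_simp
    have h5 : (k:ℝ)^k * Real.exp 1 ≤ (3^k * k.factorial) * 3 :=
      mul_le_mul ih h4 (Real.exp_pos 1).le (by positivity)
    have key : ((k:ℝ)+1)^(k+1) ≤ 3^(k+1) * (((k:ℝ)+1) * k.factorial) := by
      calc ((k:ℝ)+1)^(k+1) = ((k:ℝ)+1)^k * ((k:ℝ)+1) := by ring
        _ ≤ ((k:ℝ)^k * Real.exp 1) * ((k:ℝ)+1) := by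
            apply mul_le_mul_of_nonneg_right _ (by positivity)
            rw [← h3]; exact h2
        _ ≤ ((3^k * k.factorial) * 3) * ((k:ℝ)+1) := by
            exact mul_le_mul_of_nonneg_right h5 (by positivity)
        _ = 3^(k+1) * (((k:ℝ)+1) * k.factorial) := by ring
    push_cast [Nat.factorial_succ]
    linarith [key]

lemma aux_choose_le (m k : ℕ) (hk : 0 < k) : (m.choose k : ℝ) ≤ (3*m/k)^k := by
  have h1 : (m.choose k : ℝ) * k.factorial ≤ (m:ℝ)^k := by
    have h := Nat.descFactorial_le_pow m k
    rw [Nat.descFactorial_eq_factorial_mul_choose] at h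
    calc (m.choose k : ℝ) * k.factorial = ((k.factorial * m.choose k : ℕ) : ℝ) := by push_cast; ring
      _ ≤ ((m^k : ℕ) : ℝ) := by exact_mod_cast h
      _ = (m:ℝ)^k := by push_cast; ring
  have h2 := aux_pow_le_fact k
  have hkR : (0:ℝ) < (k:ℝ)^k := by positivity
  rw [div_pow, mul_pow, le_div_iff₀ hkR]
  calc (m.choose k : ℝ) * (k:ℝ)^k ≤ (m.choose k : ℝ) * (3^k * k.factorial) := by
        apply mul_le_mul_of_nonneg_left h2 (by positivity)
    _ = 3^k * ((m.choose k : ℝ) * k.factorial) := by ring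
    _ ≤ 3^k * (m:ℝ)^k := by
        apply mul_le_mul_of_nonneg_left h1 (by positivity)

set_option maxHeartbeats 1600000 in
lemma core (φ : ℝ) (hφ : 0 < φ) (n s : ℕ) (p fv : ℝ) (hs : 1 ≤ s)
    (hp : 0 < p) (hnp : fv ≤ n*p) (hF : Fbd φ ≤ fv)
    (hsζ : (s:ℝ) ≤ zeta φ * n) :
    (n.choose s : ℝ) * (((s*(s-1)).choose (⌊φ*n*s*p⌋₊+1)) : ℝ) * p^(⌊φ*n*s*p⌋₊+1)
      ≤ Real.exp (-fv^2/2 - s) := by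
  obtain ⟨k, hkdef⟩ : ∃ k:ℕ, k = ⌊φ*n*s*p⌋₊+1 := ⟨_, rfl⟩
  rw [← hkdef]
  have hfv1 : 1 ≤ fv := le_trans (le_max_left _ _) hF
  have hfvφ : 2 ≤ φ*fv := by
    have h2 : 2/φ ≤ fv := le_trans (le_trans (le_max_left _ _) (le_max_right _ _)) hF
    rw [div_le_iff₀ hφ] at h2; linarith
  have hD1x : Real.log (9/φ) + 1 ≤ (2/φ^2+1)*φ*fv/4 := by
    rcases le_or_gt (Real.log (9/φ)+1) 0 with h | h
    · have : 0 < (2/φ^2+1)*φ*fv/4 := by positivity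
      linarith
    · have h3 : 4*(Real.log (9/φ)+1)/((2/φ^2+1)*φ) ≤ fv :=
        le_trans (le_trans (le_max_right _ _) (le_max_right _ _)) hF
      rw [div_le_iff₀ (by positivity)] at h3
      nlinarith
  obtain ⟨C, hCdef⟩ : ∃ C:ℝ, C = 2/φ^2+1 := ⟨_, rfl⟩
  obtain ⟨D, hDdef⟩ : ∃ D:ℝ, D = Real.log (9/φ) := ⟨_, rfl⟩
  have hC : 0 < C := by rw [hCdef]; positivity
  have hD1 : D + 1 ≤ C*φ*fv/4 := by rw [hCdef, hDdef]; exact hD1x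
  have hCφ2 : 2 ≤ C*φ^2 := by
    rw [hCdef]; field_simp; nlinarith [sq_nonneg φ]
  by_cases hkm : k ≤ s*(s-1)
  · -- main case
    have hs0 : (0:ℝ) < s := by exact_mod_cast hs
    have hn : 1 ≤ n := by
      by_contra hn
      push_neg at hn
      interval_cases n
      · simp at hsζ; linarith
    have hn0 : (0:ℝ) < n := by exact_mod_cast hn
    have hk0 : 0 < k := by omega
    have hknsp : φ*n*s*p ≤ (k:ℝ) := by
      have h := Nat.lt_floor_add_one (φ*n*s*p)
      rw [hkdef]
      push_cast
      push_cast at h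
      linarith
    have hnsp0 : 0 < φ*(n:ℝ)*s*p := by positivity
    have hkR0 : (0:ℝ) < k := by exact_mod_cast hk0
    have hmcast : (((s*(s-1) : ℕ)):ℝ) = (s:ℝ)*((s:ℝ)-1) := by
      push_cast [Nat.cast_sub hs]
      ring
    have hsf : φ*fv + 1 ≤ (s:ℝ) := by
      have h1 : φ*n*s*p ≤ (s:ℝ)*((s:ℝ)-1) := by
        have : (k:ℝ) ≤ ((s*(s-1):ℕ):ℝ) := by exact_mod_cast hkm
        rw [hmcast] at this; linarith
      have h2 : φ*(n*p) ≤ (s:ℝ)-1 := by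
        nlinarith [h1, hs0]
      have h3 : φ*fv ≤ φ*(n*p) := mul_le_mul_of_nonneg_left hnp hφ.le
      linarith
    have hb1 : (n.choose s : ℝ) ≤ (3*n/s)^s := aux_choose_le n s hs
    have hb2 : (((s*(s-1)).choose k) : ℝ) * p^k ≤ (3*s/(φ*n))^k := by
      have h1 : (((s*(s-1)).choose k) : ℝ) ≤ (3*(s*(s-1):ℕ)/k)^k := aux_choose_le _ k hk0
      have hbase : 3*((s*(s-1):ℕ):ℝ)/k * p ≤ 3*s/(φ*n) := by
        rw [hmcast]
        rw [div_mul_eq_mul_div, div_le_div_iff₀ hkR0 (by positivity)]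
        have e1 : 3*((s:ℝ)*((s:ℝ)-1))*p*(φ*n) ≤ 3*((s:ℝ)*(s:ℝ))*p*(φ*n) := by nlinarith
        have e3 : (3*(s:ℝ))*(φ*n*s*p) ≤ (3*(s:ℝ))*k := by
          apply mul_le_mul_of_nonneg_left hknsp (by positivity)
        calc 3*((s:ℝ)*((s:ℝ)-1))*p*(φ*n) ≤ (3*(s:ℝ))*(φ*n*s*p) := by nlinarith [e1]
          _ ≤ (3*(s:ℝ))*k := e3
          _ = 3*(s:ℝ)*k := by ring
      have hppos : 0 ≤ p := hp.le
      calc (((s*(s-1)).choose k) : ℝ) * p^k ≤ (3*(s*(s-1):ℕ)/k)^k * p^k := by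
            apply mul_le_mul_of_nonneg_right h1 (by positivity)
        _ = (3*((s*(s-1):ℕ):ℝ)/k * p)^k := by rw [mul_pow]
        _ ≤ (3*s/(φ*n))^k := by
            apply pow_le_pow_left₀ (by positivity) hbase
    have ha : (0:ℝ) < 3*n/s := by positivity
    have ht : (0:ℝ) < 3*s/(φ*n) := by positivity
    have hlogt : Real.log (3*s/(φ*n)) ≤ -C := by
      have h1 : 3*(s:ℝ)/(φ*n) ≤ Real.exp (-C) := by
        have h2 : (3:ℝ)*s ≤ 3*(zeta φ * n) := by linarith
        rw [div_le_iff₀ (by positivity)]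
        rw [zeta] at h2
        calc 3*(s:ℝ) ≤ 3*((φ/3)*Real.exp (-(2/φ^2+1))*n) := h2
          _ = Real.exp (-C)*(φ*n) := by rw [hCdef]; ring
      calc Real.log (3*s/(φ*n)) ≤ Real.log (Real.exp (-C)) := Real.log_le_log ht h1
        _ = -C := Real.log_exp _
    obtain ⟨c, hcdef⟩ : ∃ c:ℝ, c = -Real.log (3*s/(φ*n)) := ⟨_, rfl⟩
    have hcC : C ≤ c := by rw [hcdef]; linarith
    have hc0 : 0 < c := lt_of_lt_of_le hC hcC
    have hloga : Real.log (3*n/s) = D + c := by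
      have hmul : (3*(n:ℝ)/s) * (3*s/(φ*n)) = 9/φ := by
        field_simp; ring
      have := Real.log_mul (ne_of_gt ha) (ne_of_gt ht)
      rw [hmul] at this
      rw [hcdef, hDdef]; linarith
    have hkf : φ*(s:ℝ)*fv ≤ (k:ℝ) := by
      have h1 : φ*(s:ℝ)*fv ≤ φ*(s:ℝ)*(n*p) := by
        apply mul_le_mul_of_nonneg_left hnp (by positivity)
      calc φ*(s:ℝ)*fv ≤ φ*(s:ℝ)*(n*p) := h1
        _ = φ*n*s*p := by ring
        _ ≤ (k:ℝ) := hknsp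
    have hexp : (s:ℝ)*(D+c) + (k:ℝ)*(-c) ≤ -fv^2/2 - s := by
      have hA : φ*(s:ℝ)*fv*c ≤ (k:ℝ)*c := mul_le_mul_of_nonneg_right hkf hc0.le
      have hB : (s:ℝ)*c*(1 - φ*fv) ≤ (s:ℝ)*c*(-(φ*fv)/2) := by
        apply mul_le_mul_of_nonneg_left (by linarith) (by positivity)
      have hCc : (s:ℝ)*(φ*fv/2)*C ≤ (s:ℝ)*(φ*fv/2)*c := by
        apply mul_le_mul_of_nonneg_left hcC (by positivity)
      have e1 : C*φ*fv/4 ≤ C*φ*fv/2 - (D+1) := by linarith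
      have e2 : (φ*fv)*(C*φ*fv/4) ≤ (s:ℝ)*(C*φ*fv/4) := by
        apply mul_le_mul_of_nonneg_right (by linarith) (by positivity)
      have e3 : fv^2/2 ≤ (φ*fv)*(C*φ*fv/4) := by nlinarith [sq_nonneg fv]
      have e4 : (s:ℝ)*(C*φ*fv/4) ≤ (s:ℝ)*(C*φ*fv/2 - (D+1)) := by
        apply mul_le_mul_of_nonneg_left e1 (by positivity)
      calc (s:ℝ)*(D+c) + (k:ℝ)*(-c) = (s:ℝ)*D + (s:ℝ)*c - (k:ℝ)*c := by ring
        _ ≤ (s:ℝ)*D + (s:ℝ)*c - φ*(s:ℝ)*fv*c := by linarith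
        _ = (s:ℝ)*D + ((s:ℝ)*c)*(1 - φ*fv) := by ring
        _ ≤ (s:ℝ)*D + ((s:ℝ)*c)*(-(φ*fv)/2) := by linarith [hB]
        _ = (s:ℝ)*D - ((s:ℝ)*(φ*fv/2))*c := by ring
        _ ≤ (s:ℝ)*D - ((s:ℝ)*(φ*fv/2))*C := by linarith [hCc]
        _ = -((s:ℝ)*(C*φ*fv/2 - (D+1))) - s := by ring
        _ ≤ -(fv^2/2) - s := by linarith [e2, e3, e4]
        _ = -fv^2/2 - s := by ring
    have hpow : (3*(n:ℝ)/s)^s * (3*(s:ℝ)/(φ*n))^k = Real.exp ((s:ℝ)*(D+c) + (k:ℝ)*(-c)) := by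
      rw [← hloga]
      have h1 : Real.log (3*(s:ℝ)/(φ*n)) = -c := by rw [hcdef]; ring
      rw [← h1]
      rw [Real.exp_add]
      rw [← Real.log_pow, ← Real.log_pow, Real.exp_log (by positivity), Real.exp_log (by positivity)]
    calc (n.choose s : ℝ) * (((s*(s-1)).choose k) : ℝ) * p^k
        = (n.choose s : ℝ) * ((((s*(s-1)).choose k) : ℝ) * p^k) := by ring
      _ ≤ (3*n/s)^s * ((((s*(s-1)).choose k) : ℝ) * p^k) := by
          apply mul_le_mul_of_nonneg_right hb1 (by positivity)
      _ ≤ (3*n/s)^s * (3*s/(φ*n))^k := by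
          apply mul_le_mul_of_nonneg_left hb2 (by positivity)
      _ = Real.exp ((s:ℝ)*(D+c) + (k:ℝ)*(-c)) := hpow
      _ ≤ Real.exp (-fv^2/2 - s) := Real.exp_le_exp.mpr hexp
  · push_neg at hkm
    rw [Nat.choose_eq_zero_of_lt hkm]
    simp
    positivity

lemma cyl_measure (n : ℕ) (p : ℝ) (hp1 : p ≤ 1) (T : Finset (ArcIdx n)) :
    digraphMeasure n p {ω : ArcSpace n | ∀ a ∈ T, ω a = true}
      = (ENNReal.ofReal p) ^ T.card := by
  have hmin : min (Real.toNNReal p) 1 = Real.toNNReal p :=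
    min_eq_left (Real.toNNReal_le_one.mpr hp1)
  have hset : {ω : ArcSpace n | ∀ a ∈ T, ω a = true}
      = Set.pi Set.univ (fun a => if a ∈ T then ({true} : Set Bool) else Set.univ) := by
    ext ω
    simp only [Set.mem_setOf_eq, Set.mem_pi, Set.mem_univ, forall_true_left]
    constructor
    · intro h a
      by_cases ha : a ∈ T
      · simp [ha, h a ha]
      · simp [ha]
    · intro h a ha
      have := h a
      simpa [ha] using this
  rw [hset, digraphMeasure, Measure.pi_pi]
  have hfac : ∀ a : ArcIdx n,
      (PMF.bernoulli (min (Real.toNNReal p) 1) (min_le_right _ _)).toMeasure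
        (if a ∈ T then ({true} : Set Bool) else Set.univ)
      = if a ∈ T then ENNReal.ofReal p else 1 := by
    intro a
    by_cases ha : a ∈ T
    · simp only [ha, if_true]
      rw [PMF.toMeasure_apply_singleton _ _ (by trivial)]
      rw [PMF.bernoulli_apply, hmin]
      rfl
    · simp only [ha, if_false]
      exact measure_univ
  rw [Finset.prod_congr rfl (fun a _ => hfac a)]
  rw [Finset.prod_ite_mem Finset.univ T (fun _ => ENNReal.ofReal p)]
  rw [Finset.univ_inter, Finset.prod_const]

lemma geom_half (n : ℕ) : ∑ s ∈ Finset.Icc 1 n, ((1:ℝ)/2)^s ≤ 1 - (1/2)^n := by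
  induction n with
  | zero => simp
  | succ n ih =>
    rw [← Finset.insert_Icc_right_eq_Icc_add_one (by omega : 1 ≤ n+1)]
    rw [Finset.sum_insert (by simp)]
    have : ((1:ℝ)/2)^(n+1) = (1/2)^n/2 := by ring
    rw [this]
    linarith

lemma sum_exp_le (n : ℕ) (x : ℝ) :
    ∑ s ∈ Finset.Icc 1 n, Real.exp (x - s) ≤ Real.exp x := by
  have h2 : Real.exp (-1) ≤ 1/2 := by
    rw [Real.exp_neg]
    rw [inv_le_comm₀ (Real.exp_pos 1) (by norm_num)]
    have := Real.exp_one_gt_d9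
    linarith
  have hstep : ∀ s ∈ Finset.Icc 1 n, Real.exp (x - s) ≤ Real.exp x * ((1:ℝ)/2)^s := by
    intro s _
    have h1 : Real.exp (x - s) = Real.exp x * (Real.exp (-1))^s := by
      rw [← Real.exp_nat_mul, ← Real.exp_add]
      congr 1
      push_cast
      ring
    rw [h1]
    apply mul_le_mul_of_nonneg_left _ (Real.exp_pos x).le
    exact pow_le_pow_left₀ (Real.exp_pos _).le h2 s
  calc ∑ s ∈ Finset.Icc 1 n, Real.exp (x - s)
      ≤ ∑ s ∈ Finset.Icc 1 n, Real.exp x * ((1:ℝ)/2)^s := Finset.sum_le_sum hstep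
    _ = Real.exp x * ∑ s ∈ Finset.Icc 1 n, ((1:ℝ)/2)^s := by rw [Finset.mul_sum]
    _ ≤ Real.exp x * 1 := by
        apply mul_le_mul_of_nonneg_left _ (Real.exp_pos x).le
        have := geom_half n
        have h0 : (0:ℝ) ≤ (1/2)^n := by positivity
        linarith
    _ = Real.exp x := mul_one _

lemma arcsIn_card_le {n : ℕ} (S : Finset (Fin n)) :
    (Finset.univ.filter fun a : ArcIdx n => a.val.1 ∈ S ∧ a.val.2 ∈ S).card
      ≤ S.card * (S.card - 1) := by
  have hsub : (Finset.univ.filter fun a : ArcIdx n => a.val.1 ∈ S ∧ a.val.2 ∈ S).image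
      Subtype.val ⊆ S.offDiag := by
    intro e he
    obtain ⟨a, ha, rfl⟩ := Finset.mem_image.mp he
    have := Finset.mem_filter.mp ha
    exact Finset.mem_offDiag.mpr ⟨this.2.1, this.2.2, a.2⟩
  have h1 := Finset.card_le_card hsub
  rw [Finset.card_image_of_injective _ Subtype.val_injective] at h1
  rw [Finset.offDiag_card] at h1
  have h2 : S.card * S.card - S.card = S.card * (S.card - 1) := by
    cases hS : S.card with
    | zero => simp
    | succ t =>
      have h3 : (t+1)*(t+1) = (t+1)*t + (t+1) := by ring
      have h4 : (t+1) - 1 = t := by omega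
      rw [h4]
      omega
  omega

set_option maxHeartbeats 1600000 in
/-- Sets that are not too large induce few arcs in `D(n,p)`. -/
theorem stmt12 (f : ℕ → ℝ) (hf : Tendsto f atTop atTop) (φ : ℝ) (hφ : 0 < φ) :
    ∃ ζ : ℝ, 0 < ζ ∧ ∀ p : ℕ → ℝ,
      (∀ n, f n / n ≤ p n ∧ p n ≤ 1) →
      ∀ᶠ n in atTop,
        digraphMeasure n (p n)
          {ω : ArcSpace n | ∃ S : Finset (Fin n), (S.card : ℝ) ≤ ζ * n ∧
            (φ * n * S.card * p n <
              (((DigraphOf ω).filter fun e => e.1 ∈ S ∧ e.2 ∈ S).card : ℝ))}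
        ≤ ENNReal.ofReal (Real.exp (-(f n) ^ 2 / 2)) := by
  classical
  refine ⟨zeta φ, zeta_pos hφ, ?_⟩
  intro p hp
  filter_upwards [hf.eventually (eventually_ge_atTop (Fbd φ)), eventually_ge_atTop 1]
    with n hFn hn1
  have hn0 : (0:ℝ) < n := by exact_mod_cast hn1
  have hf1 : (1:ℝ) ≤ f n := le_trans (le_max_left _ _) hFn
  have hp1 : p n ≤ 1 := (hp n).2
  have hp0 : 0 < p n :=
    lt_of_lt_of_le (div_pos (by linarith) hn0) (hp n).1
  have hnp : f n ≤ n * p n := by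
    have := (div_le_iff₀ hn0).mp (hp n).1
    linarith
  set q := ENNReal.ofReal (p n) with hq
  set kk : ℕ → ℕ := fun s => ⌊φ*(n:ℝ)*(s:ℝ)*(p n)⌋₊ + 1 with hkk
  set arcsIn : Finset (Fin n) → Finset (ArcIdx n) :=
    fun S => Finset.univ.filter (fun a => a.val.1 ∈ S ∧ a.val.2 ∈ S) with harcsIn
  set SS : Finset (Finset (Fin n)) :=
    Finset.univ.filter (fun S => 1 ≤ S.card ∧ (S.card:ℝ) ≤ zeta φ * n) with hSS
  set Bf : ℕ → ℝ := fun s =>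
    if (s:ℝ) ≤ zeta φ * n then ((s*(s-1)).choose (kk s) : ℝ) * (p n)^(kk s) else 0 with hBf
  -- covering
  have hcover : {ω : ArcSpace n | ∃ S : Finset (Fin n), (S.card : ℝ) ≤ zeta φ * n ∧
      (φ * n * S.card * p n <
        (((DigraphOf ω).filter fun e => e.1 ∈ S ∧ e.2 ∈ S).card : ℝ))}
      ⊆ ⋃ S ∈ SS, ⋃ T ∈ (arcsIn S).powersetCard (kk S.card),
          {ω : ArcSpace n | ∀ a ∈ T, ω a = true} := by
    intro ω hω
    obtain ⟨S, hScard, hlt⟩ := hω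
    have hs1 : 1 ≤ S.card := by
      rcases Nat.eq_zero_or_pos S.card with h0 | h
      · exfalso
        have hSempty : S = ∅ := Finset.card_eq_zero.mp h0
        have hzero : ((DigraphOf ω).filter fun e => e.1 ∈ S ∧ e.2 ∈ S) = ∅ := by
          rw [hSempty]
          apply Finset.filter_false_of_mem
          intro e he
          simp
        rw [hzero] at hlt
        simp [h0] at hlt
      · exact h
    have hcnt : ((DigraphOf ω).filter fun e => e.1 ∈ S ∧ e.2 ∈ S).card
        = (Finset.univ.filter (fun a : ArcIdx n =>
            ω a = true ∧ (a.val.1 ∈ S ∧ a.val.2 ∈ S))).card := by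
      rw [DigraphOf, Finset.filter_image,
        Finset.card_image_of_injective _ Subtype.val_injective, Finset.filter_filter]
    have hklt : kk S.card ≤ (Finset.univ.filter (fun a : ArcIdx n =>
        ω a = true ∧ (a.val.1 ∈ S ∧ a.val.2 ∈ S))).card := by
      have h0 : (0:ℝ) ≤ φ*(n:ℝ)*(S.card:ℝ)*(p n) := by positivity
      have hfl : ⌊φ*(n:ℝ)*(S.card:ℝ)*(p n)⌋₊ < (Finset.univ.filter (fun a : ArcIdx n =>
          ω a = true ∧ (a.val.1 ∈ S ∧ a.val.2 ∈ S))).card := by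
        rw [Nat.floor_lt h0]
        rw [hcnt] at hlt
        exact_mod_cast hlt
      simp only [hkk]
      omega
    obtain ⟨T, hTsub, hTcard⟩ := Finset.exists_subset_card_eq hklt
    have hSin : S ∈ SS := by
      rw [hSS]
      exact Finset.mem_filter.mpr ⟨Finset.mem_univ _, hs1, hScard⟩
    have hTin : T ∈ (arcsIn S).powersetCard (kk S.card) := by
      rw [Finset.mem_powersetCard]
      constructor
      · intro a haT
        have := Finset.mem_filter.mp (hTsub haT)
        rw [harcsIn]
        exact Finset.mem_filter.mpr ⟨Finset.mem_univ _, this.2.2⟩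
      · exact hTcard
    exact Set.mem_biUnion hSin (Set.mem_biUnion hTin
      (fun a haT => (Finset.mem_filter.mp (hTsub haT)).2.1))
  -- measure bound
  calc digraphMeasure n (p n) {ω : ArcSpace n | ∃ S : Finset (Fin n),
        (S.card : ℝ) ≤ zeta φ * n ∧ (φ * n * S.card * p n <
          (((DigraphOf ω).filter fun e => e.1 ∈ S ∧ e.2 ∈ S).card : ℝ))}
      ≤ digraphMeasure n (p n) (⋃ S ∈ SS, ⋃ T ∈ (arcsIn S).powersetCard (kk S.card),
          {ω : ArcSpace n | ∀ a ∈ T, ω a = true}) := measure_mono hcover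
    _ ≤ ∑ S ∈ SS, digraphMeasure n (p n) (⋃ T ∈ (arcsIn S).powersetCard (kk S.card),
          {ω : ArcSpace n | ∀ a ∈ T, ω a = true}) := measure_biUnion_finset_le _ _
    _ ≤ ∑ S ∈ SS, ∑ T ∈ (arcsIn S).powersetCard (kk S.card),
          digraphMeasure n (p n) {ω : ArcSpace n | ∀ a ∈ T, ω a = true} :=
        Finset.sum_le_sum (fun S _ => measure_biUnion_finset_le _ _)
    _ = ∑ S ∈ SS, ∑ T ∈ (arcsIn S).powersetCard (kk S.card), q ^ (kk S.card) := by
        apply Finset.sum_congr rfl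
        intro S _
        apply Finset.sum_congr rfl
        intro T hT
        rw [cyl_measure n (p n) hp1 T, (Finset.mem_powersetCard.mp hT).2]
    _ = ∑ S ∈ SS, ((arcsIn S).card.choose (kk S.card) : ℝ≥0∞) * q ^ (kk S.card) := by
        apply Finset.sum_congr rfl
        intro S _
        rw [Finset.sum_const, Finset.card_powersetCard, nsmul_eq_mul]
    _ ≤ ∑ S ∈ SS, ENNReal.ofReal (Bf S.card) := by
        apply Finset.sum_le_sum
        intro S hS
        obtain ⟨-, hs1, hsζ⟩ := Finset.mem_filter.mp hS
        have hchoose : (arcsIn S).card.choose (kk S.card)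
            ≤ (S.card * (S.card - 1)).choose (kk S.card) :=
          Nat.choose_le_choose _ (arcsIn_card_le S)
        rw [hBf]
        simp only [hsζ, if_pos]
        rw [hq, ← ENNReal.ofReal_pow hp0.le, ← ENNReal.ofReal_natCast,
          ← ENNReal.ofReal_mul (by positivity)]
        apply ENNReal.ofReal_le_ofReal
        apply mul_le_mul_of_nonneg_right _ (by positivity)
        exact_mod_cast hchoose
    _ ≤ ∑ s ∈ Finset.Icc 1 n, ((n.choose s : ℝ≥0∞) * ENNReal.ofReal (Bf s)) := by
        have hsub : SS ⊆ (Finset.Icc 1 n).biUnion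
            (fun s => (Finset.univ : Finset (Fin n)).powersetCard s) := by
          intro S hS
          obtain ⟨-, hs1, -⟩ := Finset.mem_filter.mp hS
          apply Finset.mem_biUnion.mpr
          refine ⟨S.card, ?_, ?_⟩
          · rw [Finset.mem_Icc]
            exact ⟨hs1, by simpa using Finset.card_le_univ S⟩
          · exact Finset.mem_powersetCard.mpr ⟨Finset.subset_univ S, rfl⟩
        have hdisj : (↑(Finset.Icc 1 n) : Set ℕ).PairwiseDisjoint
            (fun s => (Finset.univ : Finset (Fin n)).powersetCard s) := by
          intro a _ b _ hab
          apply Finset.disjoint_left.mpr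
          intro S hSa hSb
          exact hab (by rw [← (Finset.mem_powersetCard.mp hSa).2,
            ← (Finset.mem_powersetCard.mp hSb).2])
        calc ∑ S ∈ SS, ENNReal.ofReal (Bf S.card)
            ≤ ∑ S ∈ (Finset.Icc 1 n).biUnion
                (fun s => (Finset.univ : Finset (Fin n)).powersetCard s),
                ENNReal.ofReal (Bf S.card) :=
              Finset.sum_le_sum_of_subset hsub
          _ = ∑ s ∈ Finset.Icc 1 n, ∑ S ∈ (Finset.univ : Finset (Fin n)).powersetCard s,
                ENNReal.ofReal (Bf S.card) := Finset.sum_biUnion hdisj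
          _ = ∑ s ∈ Finset.Icc 1 n, ((n.choose s : ℝ≥0∞) * ENNReal.ofReal (Bf s)) := by
              apply Finset.sum_congr rfl
              intro s _
              rw [Finset.sum_congr rfl (fun S hS => by
                rw [(Finset.mem_powersetCard.mp hS).2])]
              rw [Finset.sum_const, Finset.card_powersetCard, nsmul_eq_mul]
              congr 2
              simp
    _ ≤ ENNReal.ofReal (Real.exp (-(f n) ^ 2 / 2)) := by
        have hterm : ∀ s, (n.choose s : ℝ≥0∞) * ENNReal.ofReal (Bf s)
            = ENNReal.ofReal ((n.choose s : ℝ) * Bf s) := by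
          intro s
          rw [← ENNReal.ofReal_natCast, ← ENNReal.ofReal_mul (by positivity)]
        have hBnonneg : ∀ s, 0 ≤ (n.choose s : ℝ) * Bf s := by
          intro s
          apply mul_nonneg (by positivity)
          rw [hBf]
          dsimp only
          split
          · positivity
          · exact le_refl 0
        rw [Finset.sum_congr rfl (fun s _ => hterm s)]
        rw [← ENNReal.ofReal_sum_of_nonneg (fun s _ => hBnonneg s)]
        apply ENNReal.ofReal_le_ofReal
        have hper : ∀ s ∈ Finset.Icc 1 n,
            (n.choose s : ℝ) * Bf s ≤ Real.exp (-(f n)^2/2 - s) := by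
          intro s hsmem
          obtain ⟨hs1, -⟩ := Finset.mem_Icc.mp hsmem
          rw [hBf]
          dsimp only
          split_ifs with hcond
          · have hc := core φ hφ n s (p n) (f n) hs1 hp0 hnp hFn hcond
            simp only [hkk]
            rw [← mul_assoc]
            exact hc
          · rw [mul_zero]
            exact (Real.exp_pos _).le
        calc ∑ s ∈ Finset.Icc 1 n, (n.choose s:ℝ) * Bf s
            ≤ ∑ s ∈ Finset.Icc 1 n, Real.exp (-(f n)^2/2 - s) := Finset.sum_le_sum hper
          _ ≤ Real.exp (-(f n)^2/2) := sum_exp_le n _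
end

section
/- If p = p(n) = (log n − h(n))/(n−1) with h(n) → ∞, then a.a.s. D(n,p) contains at least two vertices of in-degree zero, and consequently λ(D(n,p)) = 0 and D(n,p) contains no arborescence. -/
open Finset MeasureTheory Filter

/-- Number of vertices of in-degree exactly `i`. -/
def Yk {V : Type*} [Fintype V] [DecidableEq V] (A : Finset (V × V)) (i : ℕ) : ℕ :=
  (Finset.univ.filter fun v => inDegD A v = i).card

/-- `λ(D)`. -/
noncomputable def lambdaD {V : Type*} [Fintype V] [DecidableEq V]
    (A : Finset (V × V)) : ℕ :=
  sSup {l : ℕ | ∀ k ≤ l, ∑ i ∈ range k, (k - i) * Yk A i ≤ k}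

/-- `B` is an arborescence of the digraph with arc set `A`. -/
def IsArborescence {V : Type*} [Fintype V] [DecidableEq V]
    (A B : Finset (V × V)) : Prop :=
  B ⊆ A ∧ ∃ r : V, inDegD B r = 0 ∧ (∀ v, v ≠ r → inDegD B v = 1) ∧
    ∀ v : V, Relation.ReflTransGen (fun x y => (x, y) ∈ B) r v

/-! ### Auxiliary measure theory -/

lemma measurableSet_of_finite {α : Type*} [MeasurableSpace α] [MeasurableSingletonClass α]
    [Finite α] (s : Set α) : MeasurableSet s := (Set.toFinite s).measurableSet

noncomputable def bernoulliM (p : ℝ) : Measure Bool :=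
  (PMF.bernoulli (min (Real.toNNReal p) 1) (min_le_right _ _)).toMeasure

instance (p : ℝ) : IsProbabilityMeasure (bernoulliM p) := by
  unfold bernoulliM; infer_instance

instance (n : ℕ) (p : ℝ) : IsProbabilityMeasure (digraphMeasure n p) := by
  unfold digraphMeasure; infer_instance

lemma pi_sigma_blocks {ι : Type*} [Fintype ι] {κ : ι → Type*} [∀ i, Fintype (κ i)]
    (μ₀ : Measure Bool) [IsProbabilityMeasure μ₀]
    (C : ∀ i, Set (κ i → Bool)) :
    (Measure.pi fun _ : Σ i, κ i => μ₀) {f | ∀ i, (fun j => f ⟨i, j⟩) ∈ C i}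
      = ∏ i, (Measure.pi fun _ : κ i => μ₀) (C i) := by
  have hmp : MeasurePreserving (fun (g : ∀ i, κ i → Bool) (x : Σ i, κ i) => g x.1 x.2)
      (Measure.pi fun i => Measure.pi fun _ : κ i => μ₀)
      (Measure.pi fun _ : Σ i, κ i => μ₀) := by
    constructor
    · exact fun s _ => measurableSet_of_finite _
    · refine (Measure.pi_eq fun t ht => ?_).symm
      rw [Measure.map_apply (fun s _ => measurableSet_of_finite _) (measurableSet_of_finite _)]
      have hpre : (fun (g : ∀ i, κ i → Bool) (x : Σ i, κ i) => g x.1 x.2) ⁻¹' (Set.pi Set.univ t)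
          = Set.pi Set.univ fun i => Set.pi Set.univ fun j => t ⟨i, j⟩ := by
        ext g; simp [Set.mem_pi, Sigma.forall]
      rw [hpre, Measure.pi_pi]
      simp_rw [Measure.pi_pi]
      rw [← Finset.univ_sigma_univ, Finset.prod_sigma]
  rw [← hmp.measure_preimage (measurableSet_of_finite _).nullMeasurableSet]
  have hpre : (fun (g : ∀ i, κ i → Bool) (x : Σ i, κ i) => g x.1 x.2) ⁻¹'
      {f | ∀ i, (fun j => f ⟨i, j⟩) ∈ C i} = Set.pi Set.univ C := by
    ext g; simp [Set.mem_pi]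
  rw [hpre, Measure.pi_pi]

def arcEquiv (n : ℕ) : (Σ v : Fin n, {u : Fin n // u ≠ v}) ≃ ArcIdx n where
  toFun x := ⟨(x.2.1, x.1), x.2.2⟩
  invFun a := ⟨a.1.2, a.1.1, a.2⟩
  left_inv := fun ⟨_, _, _⟩ => rfl
  right_inv := fun ⟨(_, _), _⟩ => rfl

lemma digraphMeasure_blocks (n : ℕ) (p : ℝ)
    (C : ∀ v : Fin n, Set ({u : Fin n // u ≠ v} → Bool)) :
    digraphMeasure n p {ω | ∀ v, (fun u : {u : Fin n // u ≠ v} => ω (arcEquiv n ⟨v, u⟩)) ∈ C v}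
      = ∏ v, (Measure.pi fun _ : {u : Fin n // u ≠ v} => bernoulliM p) (C v) := by
  have h1 := measurePreserving_piCongrLeft (fun _ : ArcIdx n => bernoulliM p) (arcEquiv n)
  have hd : digraphMeasure n p = Measure.pi fun _ : ArcIdx n => bernoulliM p := rfl
  rw [hd, ← h1.measure_preimage (measurableSet_of_finite _).nullMeasurableSet]
  have hpre : (MeasurableEquiv.piCongrLeft (fun _ : ArcIdx n => Bool) (arcEquiv n)) ⁻¹'
      {ω : ArcSpace n | ∀ v, (fun u : {u : Fin n // u ≠ v} => ω (arcEquiv n ⟨v, u⟩)) ∈ C v}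
      = {f | ∀ v, (fun u => f ⟨v, u⟩) ∈ C v} := by
    ext f
    simp only [Set.mem_preimage, Set.mem_setOf_eq, MeasurableEquiv.coe_piCongrLeft]
    refine forall_congr' fun v => ?_
    have h2 : ∀ u : {u : Fin n // u ≠ v},
        (Equiv.piCongrLeft (fun _ : ArcIdx n => Bool) (arcEquiv n)) f (arcEquiv n ⟨v, u⟩)
          = f ⟨v, u⟩ := fun u => Equiv.piCongrLeft_apply_apply _ _ _ _
    simp_rw [h2]
  rw [hpre, pi_sigma_blocks]

lemma bernoulliM_false (p : ℝ) :
    bernoulliM p {false} = 1 - min (ENNReal.ofReal p) 1 := by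
  rw [bernoulliM, PMF.toMeasure_apply_singleton _ _ (measurableSet_singleton _),
    PMF.bernoulli_apply]
  simp only [Bool.cond_false, ENNReal.coe_sub, ENNReal.coe_one, ENNReal.coe_min]
  rfl

lemma card_ne (n : ℕ) (v : Fin n) : Fintype.card {u : Fin n // u ≠ v} = n - 1 := by
  simp [Fintype.card_subtype_compl]

lemma pi_allFalse (n : ℕ) (p : ℝ) (v : Fin n) :
    (Measure.pi fun _ : {u : Fin n // u ≠ v} => bernoulliM p)
      {f | ∀ u, f u = false} = (1 - min (ENNReal.ofReal p) 1) ^ (n - 1) := by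
  have h1 : {f : {u : Fin n // u ≠ v} → Bool | ∀ u, f u = false}
      = Set.pi Set.univ (fun _ => {false}) := by
    ext f; simp [Set.mem_pi, funext_iff]
  rw [h1, Measure.pi_pi]
  simp [bernoulliM_false, card_ne]

/-! ### Deterministic lemmas -/

lemma inDeg_zero_iff {n : ℕ} (ω : ArcSpace n) (v : Fin n) :
    inDegD (DigraphOf ω) v = 0 ↔ ∀ a : ArcIdx n, a.val.2 = v → ω a = false := by
  rw [inDegD, Finset.card_eq_zero, Finset.filter_eq_empty_iff]
  constructor
  · intro H a hav
    by_contra hb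
    have hmem : a.val ∈ DigraphOf ω :=
      Finset.mem_image.2 ⟨a, Finset.mem_filter.2 ⟨mem_univ _, by simpa using hb⟩, rfl⟩
    exact H hmem hav
  · intro H e he hev
    obtain ⟨a, ha, rfl⟩ := Finset.mem_image.1 he
    have h1 := H a hev
    simp only [Finset.mem_filter, mem_univ, true_and] at ha
    rw [h1] at ha
    exact Bool.false_ne_true ha

lemma Yk_zero_ge_two {V : Type*} [Fintype V] [DecidableEq V] {A : Finset (V × V)}
    {u v : V} (huv : u ≠ v) (hu : inDegD A u = 0) (hv : inDegD A v = 0) :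
    2 ≤ Yk A 0 := by
  have hsub : ({u, v} : Finset V) ⊆ Finset.univ.filter fun w => inDegD A w = 0 := by
    intro w hw
    rcases Finset.mem_insert.1 hw with rfl | hw
    · exact Finset.mem_filter.2 ⟨mem_univ _, hu⟩
    · rw [Finset.mem_singleton.1 hw]; exact Finset.mem_filter.2 ⟨mem_univ _, hv⟩
  calc 2 = ({u, v} : Finset V).card := (Finset.card_pair huv).symm
    _ ≤ _ := Finset.card_le_card hsub

lemma lambdaD_eq_zero {V : Type*} [Fintype V] [DecidableEq V] {A : Finset (V × V)}
    (h2 : 2 ≤ Yk A 0) : lambdaD A = 0 := by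
  have hset : {l : ℕ | ∀ k ≤ l, ∑ i ∈ range k, (k - i) * Yk A i ≤ k} = {0} := by
    ext l
    simp only [Set.mem_setOf_eq, Set.mem_singleton_iff]
    constructor
    · intro H
      by_contra hl
      have h1 := H 1 (Nat.one_le_iff_ne_zero.2 hl)
      rw [Finset.sum_range_one] at h1
      omega
    · rintro rfl k hk
      interval_cases k
      simp
  rw [lambdaD, hset, csSup_singleton]

lemma no_arborescence {V : Type*} [Fintype V] [DecidableEq V] {A : Finset (V × V)}
    {u v : V} (huv : u ≠ v) (hu : inDegD A u = 0) (hv : inDegD A v = 0) :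
    ∀ B, ¬ IsArborescence A B := by
  rintro B ⟨hBA, r, hr, hone, hreach⟩
  have key : ∀ w, inDegD A w = 0 → inDegD B w = 0 := fun w hw =>
    Nat.le_zero.1 (hw ▸ Finset.card_le_card (Finset.filter_subset_filter _ hBA))
  rcases eq_or_ne u r with heq | hur
  · have hvr : v ≠ r := fun hh => huv (heq.trans hh.symm)
    have h1 := hone v hvr
    rw [key v hv] at h1
    exact one_ne_zero h1.symm
  · have h1 := hone u hur
    rw [key u hu] at h1
    exact one_ne_zero h1.symm

/-! ### Real analysis -/

noncomputable def xcl (t : ℝ) : ℝ := min (max t 0) 1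
noncomputable def qseq (p : ℕ → ℝ) (n : ℕ) : ℝ := (1 - xcl (p n)) ^ (n - 1)

lemma xcl_nonneg (t : ℝ) : 0 ≤ xcl t := le_min (le_max_right _ _) zero_le_one
lemma xcl_le_one (t : ℝ) : xcl t ≤ 1 := min_le_right _ _
lemma qseq_nonneg (p : ℕ → ℝ) (n : ℕ) : 0 ≤ qseq p n :=
  pow_nonneg (by linarith [xcl_le_one (p n)]) _
lemma qseq_le_one (p : ℕ → ℝ) (n : ℕ) : qseq p n ≤ 1 :=
  pow_le_one₀ (by linarith [xcl_le_one (p n)]) (by linarith [xcl_nonneg (p n)])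

set_option maxHeartbeats 1000000 in
lemma T_atTop (h p : ℕ → ℝ) (hh : Tendsto h atTop atTop)
    (hp : ∀ᶠ n in atTop, p n = (Real.log n - h n) / (n - 1)) :
    Tendsto (fun n : ℕ => ((n : ℝ) - 1) * qseq p n) atTop atTop := by
  rw [tendsto_atTop]
  intro M
  set M' := max M 1 with hM'
  have hM'pos : (0 : ℝ) < M' := lt_of_lt_of_le one_pos (le_max_right _ _)
  have hcast : Tendsto (fun n : ℕ => (n : ℝ)) atTop atTop := tendsto_natCast_atTop_atTop
  have e1 : ∀ᶠ n : ℕ in atTop, 1 ≤ h n := hh.eventually (eventually_ge_atTop 1)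
  have e2 : ∀ᶠ n : ℕ in atTop, Real.log M' + 2 ≤ h n := hh.eventually (eventually_ge_atTop _)
  have e3 : ∀ᶠ n : ℕ in atTop, M' ≤ (n : ℝ) - 1 := by
    filter_upwards [hcast.eventually (eventually_ge_atTop (M' + 1))] with n hn; linarith
  have e4 : ∀ᶠ n : ℕ in atTop, Real.log n ≤ ((n : ℝ) - 1) / 2 := by
    have h0 := Real.tendsto_pow_log_div_mul_add_atTop 1 (-1) 1 one_ne_zero
    have h1 := (h0.comp hcast).eventually (eventually_le_nhds (by norm_num : (0:ℝ) < 1/2))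
    filter_upwards [h1, hcast.eventually (eventually_ge_atTop (3 : ℝ))] with n hn hn3
    simp only [Function.comp, pow_one, one_mul] at hn
    have hpos : (0 : ℝ) < (n : ℝ) + -1 := by linarith
    rw [div_le_iff₀ hpos] at hn
    linarith
  have e5 : ∀ᶠ n : ℕ in atTop, 2 * (Real.log n) ^ 2 ≤ (n : ℝ) - 1 := by
    have h0 := Real.tendsto_pow_log_div_mul_add_atTop 1 (-1) 2 one_ne_zero
    have h1 := (h0.comp hcast).eventually (eventually_le_nhds (by norm_num : (0:ℝ) < 1/2))
    filter_upwards [h1, hcast.eventually (eventually_ge_atTop (3 : ℝ))] with n hn hn3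
    simp only [Function.comp, one_mul] at hn
    have hpos : (0 : ℝ) < (n : ℝ) + -1 := by linarith
    rw [div_le_iff₀ hpos] at hn
    linarith
  have e6 : ∀ᶠ n : ℕ in atTop, (3 : ℝ) ≤ (n : ℝ) := hcast.eventually (eventually_ge_atTop 3)
  have e7 : ∀ᶠ n : ℕ in atTop, 1 ≤ n := eventually_ge_atTop 1
  filter_upwards [hp, e1, e2, e3, e4, e5, e6, e7] with n hpn h1 h2 h3 h4 h5 h6 h7
  refine le_trans (le_max_left M 1) ?_
  set N := (n : ℝ) with hN
  set L := Real.log N with hL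
  set H := h n with hH
  have hN1 : (0 : ℝ) < N - 1 := by linarith
  have hcastn : ((n - 1 : ℕ) : ℝ) = N - 1 := by
    rw [Nat.cast_sub h7, Nat.cast_one]
  by_cases hps : p n ≤ 0
  · have hx : xcl (p n) = 0 := by
      unfold xcl; rw [max_eq_right hps, min_eq_left zero_le_one]
    have hq1 : qseq p n = 1 := by unfold qseq; rw [hx]; simp
    rw [hq1, mul_one]; exact h3
  · push_neg at hps
    have hx : xcl (p n) = p n := by
      unfold xcl
      rw [max_eq_left hps.le, min_eq_left]
      rw [hpn, div_le_one hN1]; linarith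
    set P := p n with hP
    have hPN : P * (N - 1) = L - H := by
      rw [hpn]; field_simp
    have hLH : 0 < L - H := by
      rw [← hPN]; exact mul_pos hps hN1
    have hple : P ≤ 1 / 2 := by
      rw [hpn, div_le_div_iff₀ hN1 (by norm_num : (0:ℝ) < 2)]
      linarith
    have h1P : 0 < 1 - P := by linarith
    have hkey : Real.exp (-(P / (1 - P))) ≤ 1 - P := by
      have h0 := Real.add_one_le_exp (P / (1 - P))
      have hinv : 1 / (1 - P) ≤ Real.exp (P / (1 - P)) := by
        calc 1 / (1 - P) = P / (1 - P) + 1 := by field_simp; ring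
          _ ≤ _ := h0
      calc Real.exp (-(P / (1 - P))) = 1 / Real.exp (P / (1 - P)) := by
            rw [Real.exp_neg, one_div]
        _ ≤ 1 / (1 / (1 - P)) := one_div_le_one_div_of_le (by positivity) hinv
        _ = 1 - P := one_div_one_div _
    have hq : Real.exp ((N - 1) * -(P / (1 - P))) ≤ qseq p n := by
      have hpow := pow_le_pow_left₀ (Real.exp_pos _).le hkey (n - 1)
      rw [← Real.exp_nat_mul, hcastn] at hpow
      unfold qseq; rw [hx]; exact hpow
    have hexp : Real.log M' ≤ Real.log (N - 1) + (N - 1) * -(P / (1 - P)) := by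
      have ha : (N - 1) * (P / (1 - P)) = (L - H) * (1 / (1 - P)) := by
        rw [← hPN]; field_simp
      have hb : 1 / (1 - P) ≤ 1 + 2 * P := by
        rw [div_le_iff₀ h1P]; nlinarith
      have hc : (L - H) * (1 / (1 - P)) ≤ (L - H) * (1 + 2 * P) :=
        mul_le_mul_of_nonneg_left hb hLH.le
      have hLnn : 0 ≤ L := Real.log_nonneg (by linarith)
      have he : 2 * P * L ≤ 1 := by nlinarith
      have hd : (L - H) * (1 + 2 * P) ≤ (L - H) + 1 := by nlinarith
      have hf : L - 1 ≤ Real.log (N - 1) := by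
        have h2le : N / 2 ≤ N - 1 := by linarith
        have hlog := Real.log_le_log (by positivity : (0:ℝ) < N / 2) h2le
        rw [Real.log_div (by linarith) two_ne_zero] at hlog
        have hlog2 : Real.log 2 ≤ 1 := by
          linarith [Real.log_two_lt_d9]
        linarith
      have ha' : (N - 1) * -(P / (1 - P)) = -((L - H) * (1 / (1 - P))) := by
        rw [← ha]; ring
      linarith [ha', hc, hd, hf, h2]
    calc M' = Real.exp (Real.log M') := (Real.exp_log hM'pos).symm
      _ ≤ Real.exp (Real.log (N - 1) + (N - 1) * -(P / (1 - P))) := Real.exp_le_exp.2 hexp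
      _ = (N - 1) * Real.exp ((N - 1) * -(P / (1 - P))) := by
          rw [Real.exp_add, Real.exp_log hN1]
      _ ≤ (N - 1) * qseq p n := mul_le_mul_of_nonneg_left hq hN1.le

lemma b_tendsto_zero (h p : ℕ → ℝ) (hh : Tendsto h atTop atTop)
    (hp : ∀ᶠ n in atTop, p n = (Real.log n - h n) / (n - 1)) :
    Tendsto (fun n => (1 - qseq p n) ^ n + n * qseq p n * (1 - qseq p n) ^ (n - 1))
      atTop (nhds 0) := by
  have hT := T_atTop h p hh hp
  set T := fun n : ℕ => ((n : ℝ) - 1) * qseq p n with hTdef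
  have h1 : Tendsto (fun n => Real.exp (-T n)) atTop (nhds 0) :=
    Real.tendsto_exp_comp_nhds_zero.2 (tendsto_neg_atBot_iff.2 hT)
  have h2 : Tendsto (fun n => T n * Real.exp (-T n)) atTop (nhds 0) := by
    have := (Real.tendsto_pow_mul_exp_neg_atTop_nhds_zero 1).comp hT
    simpa [Function.comp_def] using this
  have hc : Tendsto (fun n => Real.exp (-T n) + 2 * (T n * Real.exp (-T n)))
      atTop (nhds 0) := by
    simpa using h1.add (h2.const_mul 2)
  refine squeeze_zero' ?_ ?_ hc
  · filter_upwards with n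
    have hb : (0:ℝ) ≤ 1 - qseq p n := by linarith [qseq_le_one p n]
    exact add_nonneg (pow_nonneg hb n)
      (mul_nonneg (mul_nonneg (Nat.cast_nonneg n) (qseq_nonneg p n)) (pow_nonneg hb _))
  · filter_upwards [eventually_ge_atTop 2] with n hn2
    set q := qseq p n with hq
    have hq0 := qseq_nonneg p n
    have hq1 := qseq_le_one p n
    have hNcast : (2 : ℝ) ≤ (n : ℝ) := by exact_mod_cast hn2
    have hcastn : ((n - 1 : ℕ) : ℝ) = (n : ℝ) - 1 := by
      rw [Nat.cast_sub (by omega), Nat.cast_one]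
    have hbase : 1 - q ≤ Real.exp (-q) := by
      have := Real.add_one_le_exp (-q); linarith
    have ht1 : (1 - q) ^ n ≤ Real.exp (-T n) := by
      calc (1 - q) ^ n ≤ Real.exp (-q) ^ n :=
            pow_le_pow_left₀ (by linarith) hbase n
        _ = Real.exp ((n : ℝ) * -q) := (Real.exp_nat_mul _ n).symm
        _ ≤ Real.exp (-T n) := by
            apply Real.exp_le_exp.2
            simp only [hTdef]
            nlinarith
    have ht2 : (n : ℝ) * q * (1 - q) ^ (n - 1) ≤ 2 * (T n * Real.exp (-T n)) := by
      have hp1 : (1 - q) ^ (n - 1) ≤ Real.exp (-T n) := by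
        calc (1 - q) ^ (n - 1) ≤ Real.exp (-q) ^ (n - 1) :=
              pow_le_pow_left₀ (by linarith) hbase _
          _ = Real.exp (((n - 1 : ℕ) : ℝ) * -q) := (Real.exp_nat_mul _ _).symm
          _ = Real.exp (-T n) := by rw [hcastn, hq]; simp only [hTdef]; ring_nf
      have hp2 : (n : ℝ) * q ≤ 2 * T n := by
        simp only [hTdef]; nlinarith
      calc (n : ℝ) * q * (1 - q) ^ (n - 1) ≤ 2 * T n * Real.exp (-T n) :=
            mul_le_mul hp2 hp1 (pow_nonneg (by linarith) _)
              (by simp only [hTdef]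
                  exact mul_nonneg (by norm_num) (mul_nonneg (by linarith) hq0))
        _ = 2 * (T n * Real.exp (-T n)) := by ring
    linarith

/-! ### The measure of the bad event -/

lemma min_ofReal_eq (t : ℝ) : min (ENNReal.ofReal t) 1 = ENNReal.ofReal (xcl t) := by
  unfold xcl
  rcases le_total t 0 with h | h
  · rw [max_eq_right h, min_eq_left zero_le_one, ENNReal.ofReal_of_nonpos h,
      ENNReal.ofReal_zero, min_eq_left zero_le_one]
  · rw [max_eq_left h]
    rcases le_total t 1 with h1 | h1
    · rw [min_eq_left h1, min_eq_left (ENNReal.ofReal_le_one.2 h1)]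
    · rw [min_eq_right h1, min_eq_right (ENNReal.one_le_ofReal.2 h1), ENNReal.ofReal_one]

lemma blocks_iff {n : ℕ} (ω : ArcSpace n) (v : Fin n) :
    (∀ u : {u : Fin n // u ≠ v}, ω (arcEquiv n ⟨v, u⟩) = false) ↔
      ∀ a : ArcIdx n, a.val.2 = v → ω a = false := by
  constructor
  · intro H a ha
    obtain ⟨⟨x, y⟩, hxy⟩ := a
    simp only at ha
    subst ha
    exact H ⟨x, hxy⟩
  · intro H u
    exact H _ rfl

lemma measure_bad_le (n : ℕ) (hn : 1 ≤ n) (p : ℕ → ℝ) :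
    digraphMeasure n (p n) {ω : ArcSpace n | ¬ ∃ u v : Fin n, u ≠ v ∧
        inDegD (DigraphOf ω) u = 0 ∧ inDegD (DigraphOf ω) v = 0}
      ≤ ENNReal.ofReal ((1 - qseq p n) ^ n + n * qseq p n * (1 - qseq p n) ^ (n - 1)) := by
  classical
  set q := qseq p n with hqdef
  have hq0 : 0 ≤ q := qseq_nonneg p n
  have hq1 : q ≤ 1 := qseq_le_one p n
  set Z : ∀ v : Fin n, Set ({u : Fin n // u ≠ v} → Bool) :=
    fun v => {f | ∀ u, f u = false} with hZ
  have hνZ : ∀ v, (Measure.pi fun _ : {u : Fin n // u ≠ v} => bernoulliM (p n)) (Z v)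
      = ENNReal.ofReal q := by
    intro v
    rw [hZ, pi_allFalse n (p n) v, min_ofReal_eq, ← ENNReal.ofReal_one,
      ← ENNReal.ofReal_sub _ (xcl_nonneg _), ← ENNReal.ofReal_pow
        (by linarith [xcl_le_one (p n)])]
    rfl
  have hνZc : ∀ v, (Measure.pi fun _ : {u : Fin n // u ≠ v} => bernoulliM (p n)) (Z v)ᶜ
      = ENNReal.ofReal (1 - q) := by
    intro v
    rw [prob_compl_eq_one_sub (measurableSet_of_finite _), hνZ v, ← ENNReal.ofReal_one,
      ← ENNReal.ofReal_sub _ hq0]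
  set A0 : Set (ArcSpace n) :=
    {ω | ∀ v, (fun u : {u : Fin n // u ≠ v} => ω (arcEquiv n ⟨v, u⟩)) ∈ (Z v)ᶜ} with hA0
  set Av : Fin n → Set (ArcSpace n) := fun v =>
    {ω | ∀ w, (fun u : {u : Fin n // u ≠ w} => ω (arcEquiv n ⟨w, u⟩)) ∈
      (if w = v then Z w else (Z w)ᶜ)} with hAv
  have hsub : {ω : ArcSpace n | ¬ ∃ u v : Fin n, u ≠ v ∧
      inDegD (DigraphOf ω) u = 0 ∧ inDegD (DigraphOf ω) v = 0} ⊆ A0 ∪ ⋃ v, Av v := by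
    intro ω hω
    simp only [Set.mem_setOf_eq] at hω
    by_cases hex : ∃ v : Fin n, ∀ a : ArcIdx n, a.val.2 = v → ω a = false
    · obtain ⟨v, hv⟩ := hex
      refine Set.mem_union_right _ (Set.mem_iUnion.2 ⟨v, ?_⟩)
      intro w
      by_cases hwv : w = v
      · subst hwv
        rw [if_pos rfl]
        exact (blocks_iff ω w).2 hv
      · rw [if_neg hwv]
        intro hall
        exact hω ⟨w, v, hwv, (inDeg_zero_iff ω w).2 ((blocks_iff ω w).1 hall),
          (inDeg_zero_iff ω v).2 hv⟩
    · refine Set.mem_union_left _ ?_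
      intro v hall
      exact hex ⟨v, (blocks_iff ω v).1 hall⟩
  have hA0m : digraphMeasure n (p n) A0 = ENNReal.ofReal (1 - q) ^ n := by
    rw [hA0, digraphMeasure_blocks]
    simp only [hνZc]
    rw [Finset.prod_const, Finset.card_univ, Fintype.card_fin]
  have hAvm : ∀ v, digraphMeasure n (p n) (Av v)
      = ENNReal.ofReal q * ENNReal.ofReal (1 - q) ^ (n - 1) := by
    intro v
    rw [hAv]
    simp only
    rw [digraphMeasure_blocks]
    rw [← Finset.mul_prod_erase Finset.univ _ (mem_univ v), if_pos rfl, hνZ v]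
    congr 1
    rw [Finset.prod_congr rfl (fun w hw => by
      rw [if_neg (Finset.mem_erase.1 hw).1, hνZc w]), Finset.prod_const,
      Finset.card_erase_of_mem (mem_univ v), Finset.card_univ, Fintype.card_fin]
  calc digraphMeasure n (p n) _ ≤ digraphMeasure n (p n) (A0 ∪ ⋃ v, Av v) :=
        measure_mono hsub
    _ ≤ digraphMeasure n (p n) A0 + digraphMeasure n (p n) (⋃ v, Av v) := measure_union_le _ _
    _ ≤ digraphMeasure n (p n) A0 + ∑' v : Fin n, digraphMeasure n (p n) (Av v) := by
        gcongr
        exact measure_iUnion_le _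
    _ = ENNReal.ofReal (1 - q) ^ n
        + n * (ENNReal.ofReal q * ENNReal.ofReal (1 - q) ^ (n - 1)) := by
        rw [hA0m, tsum_fintype]
        simp only [hAvm]
        rw [Finset.sum_const, Finset.card_univ, Fintype.card_fin, nsmul_eq_mul]
    _ = ENNReal.ofReal ((1 - q) ^ n + n * q * (1 - q) ^ (n - 1)) := by
        have hb1 : (0:ℝ) ≤ 1 - q := by linarith
        rw [ENNReal.ofReal_add (pow_nonneg hb1 n)
            (mul_nonneg (mul_nonneg (Nat.cast_nonneg n) hq0) (pow_nonneg hb1 _)),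
          ENNReal.ofReal_pow hb1,
          ENNReal.ofReal_mul (mul_nonneg (Nat.cast_nonneg n) hq0),
          ENNReal.ofReal_mul (Nat.cast_nonneg n), ENNReal.ofReal_pow hb1,
          ENNReal.ofReal_natCast, mul_assoc]

/-- If `p = (log n - h(n))/(n-1)` with `h(n) → ∞`, then a.a.s. `D(n,p)` has at
least two vertices of in-degree zero; consequently `λ = 0` and there is no
arborescence. -/
theorem stmt16 (h p : ℕ → ℝ) (hh : Tendsto h atTop atTop)
    (hp : ∀ᶠ n in atTop, p n = (Real.log n - h n) / (n - 1)) :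
    Tendsto (fun n => digraphMeasure n (p n)
        {ω : ArcSpace n |
          (∃ u v : Fin n, u ≠ v ∧ inDegD (DigraphOf ω) u = 0 ∧
            inDegD (DigraphOf ω) v = 0) ∧
          lambdaD (DigraphOf ω) = 0 ∧
          ∀ B : Finset (Fin n × Fin n), ¬ IsArborescence (DigraphOf ω) B})
      atTop (nhds 1) := by
  have hb := b_tendsto_zero h p hh hp
  set bseq := fun n : ℕ =>
    (1 - qseq p n) ^ n + n * qseq p n * (1 - qseq p n) ^ (n - 1) with hbseq
  have h0 : Tendsto (fun n => ENNReal.ofReal (bseq n)) atTop (nhds 0) := by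
    have := ENNReal.tendsto_ofReal (a := 0) hb
    simpa using this
  have hlo : Tendsto (fun n => 1 - ENNReal.ofReal (bseq n)) atTop (nhds 1) := by
    have hcont := (ENNReal.continuous_sub_left (a := 1) (by norm_num)).tendsto 0
    have := hcont.comp h0
    simpa [Function.comp_def] using this
  refine tendsto_of_tendsto_of_tendsto_of_le_of_le' hlo tendsto_const_nhds ?_ ?_
  · filter_upwards [eventually_ge_atTop 1] with n hn
    set S : Set (ArcSpace n) := {ω : ArcSpace n |
      (∃ u v : Fin n, u ≠ v ∧ inDegD (DigraphOf ω) u = 0 ∧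
        inDegD (DigraphOf ω) v = 0) ∧
      lambdaD (DigraphOf ω) = 0 ∧
      ∀ B : Finset (Fin n × Fin n), ¬ IsArborescence (DigraphOf ω) B} with hS
    set G : Set (ArcSpace n) := {ω : ArcSpace n | ∃ u v : Fin n, u ≠ v ∧
      inDegD (DigraphOf ω) u = 0 ∧ inDegD (DigraphOf ω) v = 0} with hG
    have hGS : G ⊆ S := by
      rintro ω ⟨u, v, huv, hu, hv⟩
      exact ⟨⟨u, v, huv, hu, hv⟩, lambdaD_eq_zero (Yk_zero_ge_two huv hu hv),
        no_arborescence huv hu hv⟩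
    have hGc : digraphMeasure n (p n) Gᶜ ≤ ENNReal.ofReal (bseq n) := by
      have hGceq : Gᶜ = {ω : ArcSpace n | ¬ ∃ u v : Fin n, u ≠ v ∧
          inDegD (DigraphOf ω) u = 0 ∧ inDegD (DigraphOf ω) v = 0} := by
        rw [hG, Set.compl_setOf]
      rw [hGceq]
      exact measure_bad_le n hn p
    have hcompl : digraphMeasure n (p n) G = 1 - digraphMeasure n (p n) Gᶜ := by
      rw [prob_compl_eq_one_sub (measurableSet_of_finite G),
        ENNReal.sub_sub_cancel (by norm_num) prob_le_one]
    calc 1 - ENNReal.ofReal (bseq n) ≤ 1 - digraphMeasure n (p n) Gᶜ :=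
          tsub_le_tsub_left hGc 1
      _ = digraphMeasure n (p n) G := hcompl.symm
      _ ≤ digraphMeasure n (p n) S := measure_mono hGS
  · filter_upwards with n
    exact prob_le_one
end
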